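/- Let T be a tree with n vertices and maximum degree Δ, and let v₀ ∈ V(T) be a vertex with deg(v₀) = Δ. Suppose T has a support vertex v_ℓ ≠ v₀ with deg(v_ℓ) ≥ 3. Then there exists a tree T′ with n vertices and maximum degree Δ such that irr(T′) < irr(T). -/

import Mathlib

open Finset
open scoped Classical

/-- The Albertson irregularity index: the sum over all edges of the absolute
difference of the endpoint degrees. -/
noncomputable def albertsonIndex {V : Type*} [Fintype V] (G : SimpleGraph V) : ℤ :=
  ∑ e ∈ G.edgeFinset,
    Sym2.lift ⟨fun u v => |(G.degree u : ℤ) - (G.degree v : ℤ)|,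
      fun _ _ => abs_sub_comm _ _⟩ e

namespace StmtAux

variable {V : Type*}

/-- On a minimal-length walk from `r`, every vertex other than the endpoint is strictly
closer to `r`. -/
lemma dist_lt_of_mem_support (G : SimpleGraph V) {r t : V} (W : G.Walk r t)
    (hW : W.length = G.dist r t) {x : V} (hx : x ∈ W.support) (hxt : x ≠ t) :
    G.dist r x < G.dist r t := by
  classical
  have hsplit := W.take_spec hx
  have hlen : (W.takeUntil x hx).length + (W.dropUntil x hx).length = W.length := by
    rw [← congrArg SimpleGraph.Walk.length hsplit, SimpleGraph.Walk.length_append]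
  have h1 : G.dist r x ≤ (W.takeUntil x hx).length := SimpleGraph.dist_le _
  have h2 : 0 < (W.dropUntil x hx).length := by
    rcases Nat.eq_zero_or_pos (W.dropUntil x hx).length with h | h
    · exact absurd (SimpleGraph.Walk.eq_of_length_eq_zero h) hxt
    · exact h
  omega

lemma parent_exists (G : SimpleGraph V) (hc : G.Connected) (r : V) {x : V} (hx : x ≠ r) :
    ∃ p, G.Adj x p ∧ G.dist r p + 1 = G.dist r x := by
  classical
  have hreach : G.Reachable r x := hc.preconnected r x
  obtain ⟨W, hW⟩ := hreach.exists_walk_length_eq_dist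
  have hd0 : G.dist r x ≠ 0 := by
    intro h
    exact hx ((hc.dist_eq_zero_iff).mp h).symm
  obtain ⟨y, hadj, W', hW'⟩ := SimpleGraph.Walk.exists_eq_cons_of_ne hx W.reverse
  refine ⟨y, hadj, ?_⟩
  have hlen : W.reverse.length = G.dist r x := by
    rw [SimpleGraph.Walk.length_reverse]; exact hW
  have hlenW' : W'.length + 1 = G.dist r x := by
    rw [hW'] at hlen
    simpa [SimpleGraph.Walk.length_cons] using hlen
  have h1 : G.dist r y ≤ W'.length := by
    have := SimpleGraph.dist_le W'.reverse
    simpa [SimpleGraph.Walk.length_reverse, SimpleGraph.dist_comm] using this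
  have h2 : G.dist r x ≤ G.dist r y + 1 := by
    have htri := hc.dist_triangle (u := r) (v := y) (w := x)
    have hyx : G.dist y x ≤ 1 := by
      have := SimpleGraph.dist_le (SimpleGraph.Walk.cons hadj.symm SimpleGraph.Walk.nil)
      simpa using this
    omega
  omega


/-- In a tree, every neighbor of `x` other than its parent is one step further from `r`. -/
lemma child_dist (G : SimpleGraph V) (hT : G.IsTree) (r : V) {x p : V}
    (hp : G.Adj x p) (hpd : G.dist r p + 1 = G.dist r x)
    {y : V} (hy : G.Adj x y) (hyp : y ≠ p) : G.dist r y = G.dist r x + 1 := by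
  classical
  have hc := hT.isConnected
  have hle : G.dist r y ≤ G.dist r x + 1 := by
    have htri := hc.dist_triangle (u := r) (v := x) (w := y)
    have h1 : G.dist x y ≤ 1 := by
      simpa using SimpleGraph.dist_le (SimpleGraph.Walk.cons hy SimpleGraph.Walk.nil)
    omega
  have hge : ¬ (G.dist r y ≤ G.dist r x) := by
    intro hled
    -- bridge argument
    have hbridge := (SimpleGraph.isAcyclic_iff_forall_adj_isBridge.mp hT.IsAcyclic) hy
    have hnr : ¬ (G \ SimpleGraph.fromEdgeSet {s(x, y)}).Reachable x y :=
      (SimpleGraph.isBridge_iff.mp hbridge)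
    apply hnr
    -- build a walk x → p → r → y avoiding the edge s(x,y)
    obtain ⟨Wp, hWp⟩ := (hc.preconnected r p).exists_walk_length_eq_dist
    obtain ⟨Wy, hWy⟩ := (hc.preconnected r y).exists_walk_length_eq_dist
    have hxy : x ≠ y := hy.ne
    have hxp : x ≠ p := hp.ne
    have hWp_avoid : s(x, y) ∉ Wp.edges := by
      intro hmem
      have hxsupp : x ∈ Wp.support := Wp.fst_mem_support_of_mem_edges hmem
      have := dist_lt_of_mem_support G Wp hWp hxsupp hxp
      omega
    have hWy_avoid : s(x, y) ∉ Wy.edges := by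
      intro hmem
      have hxsupp : x ∈ Wy.support := Wy.fst_mem_support_of_mem_edges hmem
      have := dist_lt_of_mem_support G Wy hWy hxsupp hxy
      omega
    set Wbig : G.Walk x y := (SimpleGraph.Walk.cons hp Wp.reverse).append Wy with hWbig
    have havoid : ∀ e ∈ Wbig.edges, e ∉ ({s(x, y)} : Set (Sym2 V)) := by
      intro e he
      simp only [Set.mem_singleton_iff]
      intro rfl_e
      subst rfl_e
      rw [hWbig] at he
      simp only [SimpleGraph.Walk.edges_append, SimpleGraph.Walk.edges_cons,
        SimpleGraph.Walk.edges_reverse, List.mem_append, List.mem_cons,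
        List.mem_reverse] at he
      rcases he with (h | h) | h
      · -- s(x,y) = s(x,p): then p = y
        rw [Sym2.eq_iff] at h
        rcases h with ⟨-, h2⟩ | ⟨h1, -⟩
        · exact hyp h2
        · exact hxp h1
      · exact hWp_avoid h
      · exact hWy_avoid h
    exact ⟨Wbig.toDeleteEdges {s(x, y)} havoid⟩
  omega


lemma two_mul_albertson [Fintype V] (G : SimpleGraph V) :
    ∑ u, ∑ v, (if G.Adj u v then |(G.degree u : ℤ) - (G.degree v : ℤ)| else 0)
      = 2 * albertsonIndex G := by
  classical
  set W : Sym2 V → ℤ := Sym2.lift ⟨fun u v => |(G.degree u : ℤ) - (G.degree v : ℤ)|,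
      fun _ _ => abs_sub_comm _ _⟩ with hW
  have h1 : ∑ u, ∑ v, (if G.Adj u v then |(G.degree u : ℤ) - (G.degree v : ℤ)| else 0)
      = ∑ p ∈ (univ ×ˢ univ).filter (fun p : V × V => G.Adj p.1 p.2), W s(p.1, p.2) := by
    rw [Finset.sum_filter, Finset.sum_product]
    simp [hW]
  rw [h1]
  have hmaps : ∀ p ∈ (univ ×ˢ univ).filter (fun p : V × V => G.Adj p.1 p.2),
      s(p.1, p.2) ∈ G.edgeFinset := by
    intro p hp
    simp only [mem_filter] at hp
    simpa [SimpleGraph.mem_edgeFinset] using hp.2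
  rw [← Finset.sum_fiberwise_of_maps_to hmaps (fun p => W s(p.1, p.2))]
  unfold albertsonIndex
  rw [← hW, Finset.mul_sum]
  apply Finset.sum_congr rfl
  intro e he
  induction e with
  | h x y =>
    have hadj : G.Adj x y := by simpa [SimpleGraph.mem_edgeFinset] using he
    have hxy : x ≠ y := hadj.ne
    have hfiber : ((univ ×ˢ univ).filter (fun p : V × V => G.Adj p.1 p.2)).filter
        (fun p => s(p.1, p.2) = s(x, y)) = {(x, y), (y, x)} := by
      ext p
      simp only [mem_filter, mem_product, mem_univ, true_and, mem_insert, mem_singleton]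
      constructor
      · rintro ⟨hadj', heq⟩
        rw [Sym2.eq_iff] at heq
        rcases heq with ⟨h1', h2'⟩ | ⟨h1', h2'⟩
        · left; exact Prod.ext h1' h2'
        · right; exact Prod.ext h1' h2'
      · rintro (rfl | rfl)
        · exact ⟨hadj, rfl⟩
        · exact ⟨hadj.symm, Sym2.eq_swap⟩
    rw [hfiber]
    rw [Finset.sum_insert (by simp [Prod.ext_iff, hxy]), Finset.sum_singleton]
    rw [show s(y, x) = s(x, y) from Sym2.eq_swap]
    ring

end StmtAux

set_option maxHeartbeats 2000000 in
/-- If a tree `T` with `n` vertices and maximum degree `Δ` (attained at `v₀`) has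
a support vertex `vℓ ≠ v₀` of degree at least 3, then there exists a tree `T'`
with `n` vertices and maximum degree `Δ` with strictly smaller Albertson index. -/
theorem stmt8 (n Δ : ℕ) (T : SimpleGraph (Fin n)) (hT : T.IsTree)
    (hΔ : T.maxDegree = Δ) (v₀ : Fin n) (hv₀ : T.degree v₀ = Δ)
    (vℓ : Fin n) (hne : vℓ ≠ v₀)
    (hsupp : ∃ u : Fin n, T.Adj vℓ u ∧ T.degree u = 1)
    (hdeg : 3 ≤ T.degree vℓ) :
    ∃ T' : SimpleGraph (Fin n), T'.IsTree ∧ T'.maxDegree = Δ ∧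
      albertsonIndex T' < albertsonIndex T := by
  classical
  have hconn := hT.isConnected
  -- choose a deepest vertex of degree ≥ 3
  obtain ⟨z, hz3, hzmax⟩ : ∃ z, 3 ≤ T.degree z ∧
      ∀ y, 3 ≤ T.degree y → T.dist v₀ y ≤ T.dist v₀ z := by
    obtain ⟨z, hz, hmax⟩ := Finset.exists_max_image
      (univ.filter fun y => 3 ≤ T.degree y) (fun y => T.dist v₀ y)
      ⟨vℓ, by simp [hdeg]⟩
    exact ⟨z, (mem_filter.mp hz).2, fun y hy => hmax y (by simp [hy])⟩
  obtain ⟨k, hk⟩ : ∃ k, T.dist v₀ z = k := ⟨_, rfl⟩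
  have hkℓ : 1 ≤ T.dist v₀ vℓ := hconn.pos_dist_of_ne (Ne.symm hne)
  have hk1 : 1 ≤ k := hk ▸ le_trans hkℓ (hzmax vℓ hdeg)
  have hz_ne_r : z ≠ v₀ := by
    intro h
    rw [h, SimpleGraph.dist_self] at hk; omega
  obtain ⟨p₀, hp₀, hp₀d⟩ := StmtAux.parent_exists T hconn v₀ hz_ne_r
  have hchild : ∀ y, T.Adj z y → y ≠ p₀ → T.dist v₀ y = k + 1 :=
    fun y hy hyp => hk ▸ StmtAux.child_dist T hT v₀ hp₀ hp₀d hy hyp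
  -- pick two distinct children of z
  have hp₀mem : p₀ ∈ T.neighborFinset z := by
    rw [SimpleGraph.mem_neighborFinset]; exact hp₀
  have hcardN : (T.neighborFinset z).card = T.degree z := rfl
  obtain ⟨a, haC, b, hbC, hab⟩ :
      ∃ a ∈ (T.neighborFinset z).erase p₀, ∃ b ∈ (T.neighborFinset z).erase p₀, a ≠ b := by
    apply Finset.one_lt_card.mp
    have := Finset.card_erase_of_mem hp₀mem
    omega
  have ha : T.Adj z a := by
    have := Finset.mem_of_mem_erase haC; rwa [SimpleGraph.mem_neighborFinset] at this
  have hb : T.Adj z b := by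
    have := Finset.mem_of_mem_erase hbC; rwa [SimpleGraph.mem_neighborFinset] at this
  have ha_ne_p : a ≠ p₀ := Finset.ne_of_mem_erase haC
  have hb_ne_p : b ≠ p₀ := Finset.ne_of_mem_erase hbC
  have hda : T.dist v₀ a = k + 1 := hchild a ha ha_ne_p
  have hdb : T.dist v₀ b = k + 1 := hchild b hb hb_ne_p
  -- all vertices strictly deeper than z have degree ≤ 2
  have hsmall : ∀ y, k < T.dist v₀ y → T.degree y ≤ 2 := by
    intro y hy
    by_contra hdy
    have := hzmax y (by omega)
    omega
  have hz_ne_a : z ≠ a := ha.ne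
  have hdist_lt : ∀ x : Fin n, T.dist v₀ x < n := by
    intro x
    obtain ⟨W, hW⟩ := (hconn.preconnected v₀ x).exists_walk_length_eq_dist
    have h1 : T.dist v₀ x ≤ W.bypass.length := SimpleGraph.dist_le W.bypass
    have h2 := W.bypass_isPath.length_lt
    simpa using lt_of_le_of_lt h1 h2
  -- descend from b to a leaf
  have descend : ∀ (m : ℕ) (x prev : Fin n), T.Adj prev x →
      T.dist v₀ prev < T.dist v₀ x → k < T.dist v₀ x → x ≠ a → prev ≠ a →
      n ≤ m + T.dist v₀ x →
      ∃ w q : Fin n, T.Adj q w ∧ T.degree w = 1 ∧ k < T.dist v₀ w ∧ w ≠ a ∧ q ≠ a ∧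
        (q = prev ∨ T.degree q = 2) ∧ (T.deleteEdges {s(z, a)}).Reachable x w := by
    intro m
    induction m with
    | zero =>
      intro x prev _ _ _ _ _ hcard
      exact absurd (hdist_lt x) (by omega)
    | succ m ih =>
      intro x prev hadj hlt hkx hxa hpreva hcard
      have hdx2 : T.degree x ≤ 2 := hsmall x hkx
      have hx_ne_r : x ≠ v₀ := by
        intro h; rw [h, SimpleGraph.dist_self] at hkx; omega
      by_cases hdx : T.degree x = 1
      · exact ⟨x, prev, hadj, hdx, hkx, hxa, hpreva, Or.inl rfl, SimpleGraph.Reachable.refl x⟩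
      · -- degree x = 2
        have h0x : 0 < T.degree x :=
          (SimpleGraph.degree_pos_iff_exists_adj T x).mpr ⟨prev, hadj.symm⟩
        obtain ⟨p, hp, hpd⟩ := StmtAux.parent_exists T hconn v₀ hx_ne_r
        have hprev_eq : prev = p := by
          by_contra hne'
          have := StmtAux.child_dist T hT v₀ hp hpd hadj.symm hne'
          omega
        -- second neighbor
        have hpmem : p ∈ T.neighborFinset x := by
          rw [SimpleGraph.mem_neighborFinset]; exact hp
        obtain ⟨y, hyC⟩ : ((T.neighborFinset x).erase p).Nonempty := by
          apply Finset.card_pos.mp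
          have h2 : 2 ≤ (T.neighborFinset x).card := by
            have : (T.neighborFinset x).card = T.degree x := rfl
            omega
          have := Finset.card_erase_of_mem hpmem
          omega
        have hy : T.Adj x y := by
          have := Finset.mem_of_mem_erase hyC; rwa [SimpleGraph.mem_neighborFinset] at this
        have hy_ne_p : y ≠ p := Finset.ne_of_mem_erase hyC
        have hdy : T.dist v₀ y = T.dist v₀ x + 1 := StmtAux.child_dist T hT v₀ hp hpd hy hy_ne_p
        have hya : y ≠ a := by
          intro h; rw [h, hda] at hdy; omega
        obtain ⟨w, q, h1, h2, h3, h4, h5, h6, h7⟩ :=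
          ih y x hy (by omega) (by omega) hya hxa (by omega)
        refine ⟨w, q, h1, h2, h3, h4, h5, ?_, ?_⟩
        · rcases h6 with h6 | h6
          · right; rw [h6]; omega
          · right; exact h6
        · -- reachability: edge x-y then h7
          have hedge : (T.deleteEdges {s(z, a)}).Adj x y := by
            rw [SimpleGraph.deleteEdges_adj]
            refine ⟨hy, ?_⟩
            simp only [Set.mem_singleton_iff, Sym2.eq_iff]
            rintro (⟨h1', h2'⟩ | ⟨h1', h2'⟩)
            · exact hya h2'
            · exact hxa h1'
          exact hedge.reachable.trans h7
  obtain ⟨w', q, hqw, hw1, hkw, hwa, hqa, hq2', hreachb⟩ :=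
    descend n b z hb (by omega) (by omega) hab.symm hz_ne_a (by omega)
  -- Facts about w', q
  have hzb_ne : s(z, b) ≠ s(z, a) := by
    rw [Ne, Sym2.eq_iff]
    rintro (⟨-, h⟩ | ⟨h1, h2⟩)
    · exact hab h.symm
    · exact hz_ne_a h1
  have hzw : (T.deleteEdges {s(z, a)}).Reachable z w' := by
    have hedge : (T.deleteEdges {s(z, a)}).Adj z b := by
      rw [SimpleGraph.deleteEdges_adj]
      exact ⟨hb, by simpa using hzb_ne⟩
    exact hedge.reachable.trans hreachb
  have hw_ne_z : w' ≠ z := by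
    intro h; rw [h, hk] at hkw; omega
  have hw_ne_v0 : w' ≠ v₀ := by
    intro h; rw [h, SimpleGraph.dist_self] at hkw; omega
  have ha_ne_v0 : a ≠ v₀ := by
    intro h; rw [h, SimpleGraph.dist_self] at hda; omega
  have hp₀_ne_w : p₀ ≠ w' := by
    intro h; rw [← h] at hkw; omega
  have hNw : T.neighborFinset w' = {q} := by
    have hqmem : q ∈ T.neighborFinset w' := by
      rw [SimpleGraph.mem_neighborFinset]; exact hqw.symm
    have hc1 : (T.neighborFinset w').card = 1 := hw1
    obtain ⟨u, hu⟩ := Finset.card_eq_one.mp hc1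
    rw [hu] at hqmem ⊢
    rw [Finset.mem_singleton] at hqmem
    rw [hqmem]
  have hq_ne_w : q ≠ w' := hqw.ne
  have hnadj_wa : ¬ T.Adj w' a := by
    intro h
    have : a ∈ T.neighborFinset w' := by rw [SimpleGraph.mem_neighborFinset]; exact h
    rw [hNw, Finset.mem_singleton] at this
    exact hqa this.symm
  have hadj_zw_iff : T.Adj z w' ↔ q = z := by
    constructor
    · intro h
      have : z ∈ T.neighborFinset w' := by rw [SimpleGraph.mem_neighborFinset]; exact h.symm
      rw [hNw, Finset.mem_singleton] at this
      exact this.symm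
    · intro h; rw [← h]; exact hqw.symm.symm
  have hamem : a ∈ T.neighborFinset z := by rw [SimpleGraph.mem_neighborFinset]; exact ha
  have hcΔ : T.degree z ≤ Δ := hΔ ▸ T.degree_le_maxDegree z
  have hda2 : T.degree a ≤ 2 := hsmall a (by omega)
  have hda1 : 1 ≤ T.degree a := (SimpleGraph.degree_pos_iff_exists_adj T a).mpr ⟨z, ha.symm⟩
  have hdw2 : T.degree w' ≤ 2 := hsmall w' (by omega)
  -- Define the new graph T'
  let T' : SimpleGraph (Fin n) :=
    { Adj := fun x y => (T.Adj x y ∧ s(x, y) ≠ s(z, a)) ∨ s(x, y) = s(w', a)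
      symm := by
        refine ⟨fun x y h => ?_⟩
        have hswap : s(y, x) = s(x, y) := Sym2.eq_swap
        rcases h with ⟨h1, h2⟩ | h1
        · exact Or.inl ⟨h1.symm, by rwa [hswap]⟩
        · exact Or.inr (by rwa [hswap])
      loopless := by
        refine ⟨fun x h => ?_⟩
        rcases h with ⟨h1, -⟩ | h1
        · exact T.loopless.irrefl x h1
        · rw [Sym2.eq_iff] at h1
          rcases h1 with ⟨h1', h2'⟩ | ⟨h1', h2'⟩
          · exact hwa (h1'.symm.trans h2')
          · exact hwa (h2'.symm.trans h1') }
  letI : DecidableRel T'.Adj := fun x y => Classical.propDecidable _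
  have hT'adj : ∀ x y, T'.Adj x y ↔
      ((T.Adj x y ∧ s(x, y) ≠ s(z, a)) ∨ s(x, y) = s(w', a)) := fun _ _ => Iff.rfl
  -- adjacency helper lemmas
  have hT'_za : ¬ T'.Adj z a := by
    rw [hT'adj]
    rintro (⟨-, h⟩ | h)
    · exact h rfl
    · rw [Sym2.eq_iff] at h
      rcases h with ⟨h1, -⟩ | ⟨h1, -⟩
      · exact hw_ne_z h1.symm
      · exact hz_ne_a h1
  have hT'_wa : T'.Adj w' a := Or.inr rfl
  have hT'_z_iff : ∀ y, y ≠ a → (T'.Adj z y ↔ T.Adj z y) := by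
    intro y hy
    rw [hT'adj]
    constructor
    · rintro (⟨h, -⟩ | h)
      · exact h
      · rw [Sym2.eq_iff] at h
        rcases h with ⟨h1, -⟩ | ⟨h1, -⟩
        · exact absurd h1.symm hw_ne_z
        · exact absurd h1 hz_ne_a
    · intro h
      refine Or.inl ⟨h, ?_⟩
      rw [Ne, Sym2.eq_iff]
      rintro (⟨-, h2⟩ | ⟨h1, -⟩)
      · exact hy h2
      · exact hz_ne_a h1
  have hT'_w_iff : ∀ y, y ≠ a → (T'.Adj w' y ↔ T.Adj w' y) := by
    intro y hy
    rw [hT'adj]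
    constructor
    · rintro (⟨h, -⟩ | h)
      · exact h
      · rw [Sym2.eq_iff] at h
        rcases h with ⟨-, h2⟩ | ⟨h1, -⟩
        · exact absurd h2 hy
        · exact absurd h1 hwa
    · intro h
      refine Or.inl ⟨h, ?_⟩
      rw [Ne, Sym2.eq_iff]
      rintro (⟨h1, -⟩ | ⟨h1, -⟩)
      · exact hw_ne_z h1
      · exact hwa h1
  have hT'_gen : ∀ x y : Fin n, x ≠ z → x ≠ w' → x ≠ a → (T'.Adj x y ↔ T.Adj x y) := by
    intro x y hx1 hx2 hx3
    rw [hT'adj]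
    constructor
    · rintro (⟨h, -⟩ | h)
      · exact h
      · rw [Sym2.eq_iff] at h
        rcases h with ⟨h1, -⟩ | ⟨h1, -⟩
        · exact absurd h1 hx2
        · exact absurd h1 hx3
    · intro h
      refine Or.inl ⟨h, ?_⟩
      rw [Ne, Sym2.eq_iff]
      rintro (⟨h1, -⟩ | ⟨h1, -⟩)
      · exact hx1 h1
      · exact hx3 h1
  -- neighbor finsets and degrees in T'
  have hN'z : T'.neighborFinset z = (T.neighborFinset z).erase a := by
    ext y
    rw [SimpleGraph.mem_neighborFinset, Finset.mem_erase, SimpleGraph.mem_neighborFinset]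
    by_cases hy : y = a
    · subst hy
      exact iff_of_false hT'_za (by simp)
    · rw [hT'_z_iff y hy]
      exact ⟨fun h => ⟨hy, h⟩, fun h => h.2⟩
  have hdeg'_z : T'.degree z = T.degree z - 1 := by
    show (T'.neighborFinset z).card = T.degree z - 1
    rw [hN'z, Finset.card_erase_of_mem hamem]
    rfl
  have hN'w : T'.neighborFinset w' = {q, a} := by
    ext y
    rw [SimpleGraph.mem_neighborFinset, Finset.mem_insert, Finset.mem_singleton]
    by_cases hy : y = a
    · subst hy
      exact iff_of_true hT'_wa (Or.inr rfl)
    · rw [hT'_w_iff y hy]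
      constructor
      · intro h
        have : y ∈ T.neighborFinset w' := by rw [SimpleGraph.mem_neighborFinset]; exact h
        rw [hNw, Finset.mem_singleton] at this
        exact Or.inl this
      · rintro (rfl | rfl)
        · exact hqw.symm
        · exact absurd rfl hy
  have hdeg'_w : T'.degree w' = 2 := by
    show (T'.neighborFinset w').card = 2
    rw [hN'w]
    rw [Finset.card_insert_of_notMem (by rwa [Finset.mem_singleton]), Finset.card_singleton]
  have hN'a : T'.neighborFinset a = insert w' ((T.neighborFinset a).erase z) := by
    ext y
    rw [SimpleGraph.mem_neighborFinset, Finset.mem_insert, Finset.mem_erase,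
      SimpleGraph.mem_neighborFinset]
    constructor
    · rintro (⟨h1, h2⟩ | h1)
      · right
        refine ⟨?_, h1⟩
        intro hyz
        subst hyz
        exact h2 Sym2.eq_swap
      · rw [Sym2.eq_iff] at h1
        rcases h1 with ⟨h1', h2'⟩ | ⟨-, h2'⟩
        · exact absurd h1' (fun h => hwa h.symm)
        · exact Or.inl h2'
    · rintro (rfl | ⟨h1, h2⟩)
      · exact T'.adj_symm hT'_wa
      · refine Or.inl ⟨h2, ?_⟩
        rw [Ne, Sym2.eq_iff]
        rintro (⟨h1', -⟩ | ⟨-, h2'⟩)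
        · exact hz_ne_a h1'.symm
        · exact h1 h2'
  have hdeg'_a : T'.degree a = T.degree a := by
    show (T'.neighborFinset a).card = T.degree a
    rw [hN'a]
    have hzmem : z ∈ T.neighborFinset a := by
      rw [SimpleGraph.mem_neighborFinset]; exact ha.symm
    have hw_not : w' ∉ (T.neighborFinset a).erase z := by
      intro h
      have := Finset.mem_of_mem_erase h
      rw [SimpleGraph.mem_neighborFinset] at this
      exact hnadj_wa this.symm
    rw [Finset.card_insert_of_notMem hw_not, Finset.card_erase_of_mem hzmem]
    have : 0 < (T.neighborFinset a).card := by
      rw [Finset.card_pos]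
      exact ⟨z, hzmem⟩
    show (T.neighborFinset a).card - 1 + 1 = (T.neighborFinset a).card
    omega
  have hdeg'_ne : ∀ x : Fin n, x ≠ z → x ≠ w' → T'.degree x = T.degree x := by
    intro x hx1 hx2
    by_cases hx3 : x = a
    · subst hx3; exact hdeg'_a
    · show (T'.neighborFinset x).card = (T.neighborFinset x).card
      congr 1
      ext y
      rw [SimpleGraph.mem_neighborFinset, SimpleGraph.mem_neighborFinset]
      exact hT'_gen x y hx1 hx2 hx3
  -- T' is connected
  have hle : T.deleteEdges {s(z, a)} ≤ T' := by
    intro x y h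
    rw [SimpleGraph.deleteEdges_adj] at h
    exact Or.inl ⟨h.1, by simpa using h.2⟩
  have hreach_za' : T'.Reachable z a := (hzw.mono hle).trans hT'_wa.reachable
  have hkey : ∀ x y : Fin n, T.Adj x y → T'.Reachable x y := by
    intro x y hxy
    by_cases h : s(x, y) = s(z, a)
    · rw [Sym2.eq_iff] at h
      rcases h with ⟨h1, h2⟩ | ⟨h1, h2⟩
      · subst h1; subst h2; exact hreach_za'
      · subst h1; subst h2; exact hreach_za'.symm
    · exact SimpleGraph.Adj.reachable (Or.inl ⟨hxy, h⟩)
  have hwalk : ∀ x y : Fin n, T.Walk x y → T'.Reachable x y := by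
    intro x y W
    induction W with
    | nil => exact SimpleGraph.Reachable.refl _
    | cons h p ih => exact (hkey _ _ h).trans ih
  have hconn' : T'.Connected := by
    rw [SimpleGraph.connected_iff]
    refine ⟨fun x y => ?_, ⟨v₀⟩⟩
    exact (hconn.preconnected x y).elim (fun W => hwalk x y W)
  -- T' is acyclic
  have hacy' : T'.IsAcyclic := by
    intro v c hc
    by_cases he : s(w', a) ∈ c.edges
    · have hbridge := (SimpleGraph.isAcyclic_iff_forall_adj_isBridge.mp hT.IsAcyclic) ha
      have hnr := (SimpleGraph.isBridge_iff.mp hbridge)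
      apply hnr
      have h2 : (T' \ SimpleGraph.fromEdgeSet {s(w', a)}).Reachable w' a :=
        (SimpleGraph.adj_and_reachable_delete_edges_iff_exists_cycle.mpr ⟨v, c, hc, he⟩).2
      have hle2 : (T' \ SimpleGraph.fromEdgeSet {s(w', a)}) ≤ T.deleteEdges {s(z, a)} := by
        intro x y h
        rw [SimpleGraph.sdiff_adj] at h
        obtain ⟨h1, h2'⟩ := h
        have hne1 : s(x, y) ≠ s(w', a) := by
          intro hmm
          apply h2'
          rw [SimpleGraph.fromEdgeSet_adj]
          exact ⟨by simp [hmm], (T'.ne_of_adj h1)⟩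
        rcases h1 with ⟨h3, h4⟩ | h3
        · rw [SimpleGraph.deleteEdges_adj]; exact ⟨h3, by simpa using h4⟩
        · exact absurd h3 hne1
      exact hzw.trans (h2.mono hle2)
    · have hsub : ∀ e ∈ c.edges, e ∈ T.edgeSet := by
        intro e
        induction e with
        | h x y =>
          intro hee
          have hT'e : T'.Adj x y := c.adj_of_mem_edges hee
          rw [SimpleGraph.mem_edgeSet]
          rcases hT'e with ⟨h1, -⟩ | h1
          · exact h1
          · exact absurd (h1 ▸ hee) he
      exact hT.IsAcyclic (c.transfer T hsub) (hc.transfer hsub)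
  have hT'tree : T'.IsTree := ⟨hconn', hacy'⟩
  -- maxDegree of T'
  have hΔ3 : 3 ≤ Δ := le_trans hz3 hcΔ
  have hmax' : T'.maxDegree = Δ := by
    apply le_antisymm
    · apply SimpleGraph.maxDegree_le_of_forall_degree_le
      intro x
      by_cases hx1 : x = z
      · subst hx1; rw [hdeg'_z]; omega
      · by_cases hx2 : x = w'
        · subst hx2; rw [hdeg'_w]; omega
        · rw [hdeg'_ne x hx1 hx2]
          exact hΔ ▸ T.degree_le_maxDegree x
    · have : T'.degree v₀ = Δ := by
        rw [hdeg'_ne v₀ (Ne.symm hz_ne_r) (Ne.symm hw_ne_v0)]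
        exact hv₀
      exact this ▸ T'.degree_le_maxDegree v₀
  refine ⟨T', hT'tree, hmax', ?_⟩
  have key : ∑ u, ∑ v, (if T.Adj u v then |(T.degree u : ℤ) - (T.degree v : ℤ)| else 0)
      = 2 * albertsonIndex T := StmtAux.two_mul_albertson T
  have key' : ∑ u, ∑ v, (if T'.Adj u v then |(T'.degree u : ℤ) - (T'.degree v : ℤ)| else 0)
      = 2 * albertsonIndex T' := StmtAux.two_mul_albertson T'
  -- integer versions of degree facts
  have hDz3 : (3:ℤ) ≤ (T.degree z : ℤ) := by exact_mod_cast hz3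
  have hD'z : (T'.degree z : ℤ) = (T.degree z : ℤ) - 1 := by
    rw [hdeg'_z]
    have h1 : 1 ≤ T.degree z := by omega
    push_cast [h1]
    ring
  have hD'w : (T'.degree w' : ℤ) = 2 := by exact_mod_cast hdeg'_w
  have hDw : (T.degree w' : ℤ) = 1 := by exact_mod_cast hw1
  have hDa2' : (T.degree a : ℤ) ≤ 2 := by exact_mod_cast hda2
  have hDa1' : (1:ℤ) ≤ (T.degree a : ℤ) := by exact_mod_cast hda1
  have hD'ne : ∀ x : Fin n, x ≠ z → x ≠ w' → (T'.degree x : ℤ) = (T.degree x : ℤ) :=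
    fun x h1 h2 => by exact_mod_cast hdeg'_ne x h1 h2
  have hD'a : (T'.degree a : ℤ) = (T.degree a : ℤ) :=
    hD'ne a (Ne.symm hz_ne_a) (Ne.symm hwa)
  set δ : Fin n → Fin n → ℤ := fun u v =>
    (if T'.Adj u v then |(T'.degree u : ℤ) - (T'.degree v : ℤ)| else 0)
      - (if T.Adj u v then |(T.degree u : ℤ) - (T.degree v : ℤ)| else 0) with hδ
  have hδval : ∀ u v : Fin n, δ u v =
      (if T'.Adj u v then |(T'.degree u : ℤ) - (T'.degree v : ℤ)| else 0)
        - (if T.Adj u v then |(T.degree u : ℤ) - (T.degree v : ℤ)| else 0) :=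
    fun u v => rfl
  have hδsymm : ∀ u v : Fin n, δ u v = δ v u := by
    intro u v
    rw [hδval u v, hδval v u,
      if_congr (T'.adj_comm u v) (abs_sub_comm _ _) rfl,
      if_congr (T.adj_comm u v) (abs_sub_comm _ _) rfl]
  have hδ0 : ∀ u v : Fin n, u ≠ z → u ≠ w' → v ≠ z → v ≠ w' → δ u v = 0 := by
    intro u v hu1 hu2 hv1 hv2
    by_cases huv : u = v
    · subst huv
      rw [hδval, if_neg (T'.loopless.irrefl u), if_neg (T.loopless.irrefl u)]
      ring
    · have hadj_iff : T'.Adj u v ↔ T.Adj u v := by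
        by_cases hua : u = a
        · have hva : v ≠ a := fun h => huv (hua.trans h.symm)
          rw [hua, T'.adj_comm, T.adj_comm]
          exact hT'_gen v a hv1 hv2 hva
        · exact hT'_gen u v hu1 hu2 hua
      rw [hδval, if_congr hadj_iff rfl rfl, hD'ne u hu1 hu2, hD'ne v hv1 hv2]
      ring
  have hzz : δ z z = 0 := by
    rw [hδval, if_neg (T'.loopless.irrefl z), if_neg (T.loopless.irrefl z)]; ring
  have hww : δ w' w' = 0 := by
    rw [hδval, if_neg (T'.loopless.irrefl w'), if_neg (T.loopless.irrefl w')]; ring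
  have hδza : δ z a = -((T.degree z : ℤ) - (T.degree a : ℤ)) := by
    rw [hδval, if_neg hT'_za, if_pos ha,
      abs_of_nonneg (by linarith : (0:ℤ) ≤ (T.degree z : ℤ) - (T.degree a : ℤ))]
    ring
  have hδwa : δ w' a = 2 - (T.degree a : ℤ) := by
    rw [hδval, if_pos hT'_wa, if_neg hnadj_wa, hD'w, hD'a,
      abs_of_nonneg (by linarith : (0:ℤ) ≤ 2 - (T.degree a : ℤ))]
    ring
  -- sum over row z
  have hSz_supp : ∀ v, v ∉ T.neighborFinset z → δ z v = 0 := by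
    intro v hv
    have hva : v ≠ a := fun h => hv (h ▸ hamem)
    have h1 : ¬ T.Adj z v := by rwa [SimpleGraph.mem_neighborFinset] at hv
    have h2 : ¬ T'.Adj z v := fun h => h1 ((hT'_z_iff v hva).mp h)
    rw [hδval, if_neg h2, if_neg h1]
    ring
  have hSz_eq : ∑ v, δ z v = δ z a + ∑ v ∈ (T.neighborFinset z).erase a, δ z v := by
    rw [← Finset.sum_subset (Finset.subset_univ (T.neighborFinset z))
      (fun v _ hv => hSz_supp v hv)]
    exact (Finset.add_sum_erase _ _ hamem).symm
  -- pointwise bound on the erased sum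
  have hvbound : ∀ v ∈ (T.neighborFinset z).erase a,
      δ z v ≤ (if v = p₀ then (1:ℤ) else if v = w' then -2 else -1) := by
    intro v hv
    have hva : v ≠ a := Finset.ne_of_mem_erase hv
    have hvadj : T.Adj z v := by
      have := Finset.mem_of_mem_erase hv
      rwa [SimpleGraph.mem_neighborFinset] at this
    have hvadj' : T'.Adj z v := (hT'_z_iff v hva).mpr hvadj
    have hval : δ z v = |(T'.degree z : ℤ) - (T'.degree v : ℤ)|
        - |(T.degree z : ℤ) - (T.degree v : ℤ)| := by
      rw [hδval, if_pos hvadj', if_pos hvadj]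
    have hv_ne_z : v ≠ z := fun h => T.irrefl (h ▸ hvadj)
    by_cases hvp : v = p₀
    · rw [if_pos hvp]
      have hv_ne_w : v ≠ w' := by rw [hvp]; exact hp₀_ne_w
      rw [hval, hD'z, hD'ne v hv_ne_z hv_ne_w]
      have habs := abs_sub_abs_le_abs_sub ((T.degree z : ℤ) - 1 - (T.degree v : ℤ))
        ((T.degree z : ℤ) - (T.degree v : ℤ))
      have heq1 : ((T.degree z : ℤ) - 1 - (T.degree v : ℤ))
          - ((T.degree z : ℤ) - (T.degree v : ℤ)) = -1 := by ring
      rw [heq1] at habs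
      simpa using habs
    · rw [if_neg hvp]
      by_cases hvw : v = w'
      · rw [if_pos hvw, hval, hvw, hD'z, hD'w, hDw,
          abs_of_nonneg (by linarith : (0:ℤ) ≤ (T.degree z : ℤ) - 1 - 2),
          abs_of_nonneg (by linarith : (0:ℤ) ≤ (T.degree z : ℤ) - 1)]
        linarith
      · rw [if_neg hvw]
        have hdv2 : (T.degree v : ℤ) ≤ 2 := by
          have := hsmall v (by rw [hchild v hvadj hvp]; omega)
          exact_mod_cast this
        rw [hval, hD'z, hD'ne v hv_ne_z hvw,
          abs_of_nonneg (by linarith : (0:ℤ) ≤ (T.degree z : ℤ) - 1 - (T.degree v : ℤ)),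
          abs_of_nonneg (by linarith : (0:ℤ) ≤ (T.degree z : ℤ) - (T.degree v : ℤ))]
        linarith
  have hp₀s : p₀ ∈ (T.neighborFinset z).erase a :=
    Finset.mem_erase.mpr ⟨Ne.symm ha_ne_p, hp₀mem⟩
  have hcards : ((T.neighborFinset z).erase a).card = T.degree z - 1 :=
    Finset.card_erase_of_mem hamem
  -- sum over row w'
  have hSw_supp : ∀ v, v ≠ q → v ≠ a → δ w' v = 0 := by
    intro v hv1 hv2
    have h1 : ¬ T.Adj w' v := by
      intro h
      have : v ∈ T.neighborFinset w' := by rw [SimpleGraph.mem_neighborFinset]; exact h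
      rw [hNw, Finset.mem_singleton] at this
      exact hv1 this
    have h2 : ¬ T'.Adj w' v := fun h => h1 ((hT'_w_iff v hv2).mp h)
    rw [hδval, if_neg h2, if_neg h1]
    ring
  have hSw_eq : ∑ v, δ w' v = δ w' q + δ w' a := by
    have hsub : ∑ v ∈ ({q, a} : Finset (Fin n)), δ w' v = ∑ v, δ w' v :=
      Finset.sum_subset (Finset.subset_univ _) (by
        intro v _ hv
        simp only [Finset.mem_insert, Finset.mem_singleton, not_or] at hv
        exact hSw_supp v hv.1 hv.2)
    rw [← hsub, Finset.sum_pair hqa]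
  -- global decomposition
  have hz_ne_w' : z ≠ w' := Ne.symm hw_ne_z
  have hrow : ∀ u : Fin n, u ∉ ({z, w'} : Finset (Fin n)) → ∑ v, δ u v = δ u z + δ u w' := by
    intro u hu
    simp only [Finset.mem_insert, Finset.mem_singleton, not_or] at hu
    have hsub : ∑ v ∈ ({z, w'} : Finset (Fin n)), δ u v = ∑ v, δ u v :=
      Finset.sum_subset (Finset.subset_univ _) (by
        intro v _ hv
        simp only [Finset.mem_insert, Finset.mem_singleton, not_or] at hv
        exact hδ0 u v hu.1 hu.2 hv.1 hv.2)
    rw [← hsub, Finset.sum_pair hz_ne_w']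
  have hcol_z : ∑ u, δ u z = ∑ v, δ z v := Finset.sum_congr rfl (fun u _ => hδsymm u z)
  have hcol_w : ∑ u, δ u w' = ∑ v, δ w' v := Finset.sum_congr rfl (fun u _ => hδsymm u w')
  have htotal : ∑ u, ∑ v, δ u v
      = 2 * (∑ v, δ z v) + 2 * (∑ v, δ w' v) - 2 * δ z w' := by
    have e0 := Finset.sum_add_sum_compl ({z, w'} : Finset (Fin n)) (fun u => ∑ v, δ u v)
    have e1 : ∑ u ∈ ({z, w'} : Finset (Fin n)), ∑ v, δ u v
        = (∑ v, δ z v) + (∑ v, δ w' v) := Finset.sum_pair hz_ne_w'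
    have e2 : ∑ u ∈ ({z, w'} : Finset (Fin n))ᶜ, ∑ v, δ u v
        = ∑ u ∈ ({z, w'} : Finset (Fin n))ᶜ, (δ u z + δ u w') :=
      Finset.sum_congr rfl (fun u hu => hrow u (Finset.mem_compl.mp hu))
    have e3 := Finset.sum_add_sum_compl ({z, w'} : Finset (Fin n)) (fun u => δ u z)
    have e4 := Finset.sum_add_sum_compl ({z, w'} : Finset (Fin n)) (fun u => δ u w')
    have e5 : ∑ u ∈ ({z, w'} : Finset (Fin n)), δ u z = δ z z + δ w' z :=
      Finset.sum_pair hz_ne_w'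
    have e6 : ∑ u ∈ ({z, w'} : Finset (Fin n)), δ u w' = δ z w' + δ w' w' :=
      Finset.sum_pair hz_ne_w'
    have e7 : ∑ u ∈ ({z, w'} : Finset (Fin n))ᶜ, (δ u z + δ u w')
        = ∑ u ∈ ({z, w'} : Finset (Fin n))ᶜ, δ u z
          + ∑ u ∈ ({z, w'} : Finset (Fin n))ᶜ, δ u w' := Finset.sum_add_distrib
    have e8 : δ w' z = δ z w' := hδsymm w' z
    rw [← e0, e1, e2, e7]
    rw [hcol_z] at e3
    rw [hcol_w] at e4
    rw [e5] at e3
    rw [e6] at e4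
    rw [hzz] at e3
    rw [hww] at e4
    rw [e8] at e3
    have e9 : ∑ u ∈ ({z, w'} : Finset (Fin n))ᶜ, δ u z = (∑ v, δ z v) - δ z w' := by
      linarith [e3]
    have e10 : ∑ u ∈ ({z, w'} : Finset (Fin n))ᶜ, δ u w' = (∑ v, δ w' v) - δ z w' := by
      linarith [e4]
    rw [e9, e10]
    ring
  -- main inequality
  have hneg : ∑ u, ∑ v, δ u v < 0 := by
    rcases hq2' with hqz | hq2
    · -- case q = z : w' is a child of z
      have hadjzw : T.Adj z w' := hqz ▸ hqw
      have hws : w' ∈ (T.neighborFinset z).erase a := by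
        rw [Finset.mem_erase, SimpleGraph.mem_neighborFinset]
        exact ⟨hwa, hadjzw⟩
      have hw_ne_p : w' ≠ p₀ := Ne.symm hp₀_ne_w
      have hgsum : ∑ v ∈ (T.neighborFinset z).erase a,
          (if v = p₀ then (1:ℤ) else if v = w' then -2 else -1)
          = 2 - (T.degree z : ℤ) := by
        rw [← Finset.add_sum_erase _ _ hp₀s, if_pos rfl]
        have hws2 : w' ∈ ((T.neighborFinset z).erase a).erase p₀ :=
          Finset.mem_erase.mpr ⟨hw_ne_p, hws⟩
        rw [← Finset.add_sum_erase _ _ hws2, if_neg hw_ne_p, if_pos rfl]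
        have hconst : ∀ v ∈ (((T.neighborFinset z).erase a).erase p₀).erase w',
            (if v = p₀ then (1:ℤ) else if v = w' then -2 else -1) = -1 := by
          intro v hv
          rw [if_neg (Finset.ne_of_mem_erase (Finset.mem_of_mem_erase hv)),
            if_neg (Finset.ne_of_mem_erase hv)]
        rw [Finset.sum_congr rfl hconst, Finset.sum_const]
        have hcc : ((((T.neighborFinset z).erase a).erase p₀).erase w').card
            = T.degree z - 3 := by
          rw [Finset.card_erase_of_mem hws2, Finset.card_erase_of_mem hp₀s, hcards]
          omega
        rw [hcc, nsmul_eq_mul, Nat.cast_sub (by omega : 3 ≤ T.degree z)]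
        push_cast
        ring
      have hSz_le : ∑ v, δ z v ≤ -(((T.degree z : ℤ)) - (T.degree a : ℤ))
          + (2 - (T.degree z : ℤ)) := by
        rw [hSz_eq, hδza]
        have := Finset.sum_le_sum hvbound
        rw [hgsum] at this
        linarith
      have hδwz : δ w' z = -2 := by
        have h1' : T.Adj w' z := hadjzw.symm
        have h2' : T'.Adj w' z := (hT'_w_iff z hz_ne_a).mpr h1'
        rw [hδval, if_pos h2', if_pos h1', hD'w, hD'z, hDw,
          abs_of_nonpos (by linarith : 2 - ((T.degree z : ℤ) - 1) ≤ 0),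
          abs_of_nonpos (by linarith : (1:ℤ) - (T.degree z : ℤ) ≤ 0)]
        ring
      have hδzw : δ z w' = -2 := (hδsymm z w').trans hδwz
      have hδwq : δ w' q = -2 := by rw [hqz]; exact hδwz
      have hSw_le : ∑ v, δ w' v = -2 + (2 - (T.degree a : ℤ)) := by
        rw [hSw_eq, hδwq, hδwa]
      rw [htotal, hSw_le, hδzw]
      linarith
    · -- case q ≠ z (then degree q = 2)
      have hq_ne_z : q ≠ z := by
        intro h
        rw [h] at hq2
        omega
      have hw_notin : w' ∉ (T.neighborFinset z).erase a := by
        intro h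
        have := Finset.mem_of_mem_erase h
        rw [SimpleGraph.mem_neighborFinset] at this
        exact hq_ne_z (hadj_zw_iff.mp this)
      have hgsum : ∑ v ∈ (T.neighborFinset z).erase a,
          (if v = p₀ then (1:ℤ) else if v = w' then -2 else -1)
          = 3 - (T.degree z : ℤ) := by
        rw [← Finset.add_sum_erase _ _ hp₀s, if_pos rfl]
        have hconst : ∀ v ∈ ((T.neighborFinset z).erase a).erase p₀,
            (if v = p₀ then (1:ℤ) else if v = w' then -2 else -1) = -1 := by
          intro v hv
          rw [if_neg (Finset.ne_of_mem_erase hv)]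
          rw [if_neg ?_]
          intro hvw
          exact hw_notin (hvw ▸ Finset.mem_of_mem_erase hv)
        rw [Finset.sum_congr rfl hconst, Finset.sum_const]
        have hcc : (((T.neighborFinset z).erase a).erase p₀).card = T.degree z - 2 := by
          rw [Finset.card_erase_of_mem hp₀s, hcards]
          omega
        rw [hcc, nsmul_eq_mul, Nat.cast_sub (by omega : 2 ≤ T.degree z)]
        push_cast
        ring
      have hSz_le : ∑ v, δ z v ≤ -(((T.degree z : ℤ)) - (T.degree a : ℤ))
          + (3 - (T.degree z : ℤ)) := by
        rw [hSz_eq, hδza]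
        have := Finset.sum_le_sum hvbound
        rw [hgsum] at this
        linarith
      have hδwq : δ w' q = -1 := by
        have h1' : T.Adj w' q := hqw.symm
        have h2' : T'.Adj w' q := (hT'_w_iff q hqa).mpr h1'
        have hdq : (T.degree q : ℤ) = 2 := by exact_mod_cast hq2
        rw [hδval, if_pos h2', if_pos h1', hD'w, hDw, hD'ne q hq_ne_z hq_ne_w, hdq]
        norm_num
      have hδzw : δ z w' = 0 := by
        have h1' : ¬ T.Adj z w' := fun h => hq_ne_z (hadj_zw_iff.mp h)
        have h2' : ¬ T'.Adj z w' := fun h => h1' ((hT'_z_iff w' hwa).mp h)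
        rw [hδval, if_neg h2', if_neg h1']
        ring
      have hSw_le : ∑ v, δ w' v = -1 + (2 - (T.degree a : ℤ)) := by
        rw [hSw_eq, hδwq, hδwa]
      rw [htotal, hSw_le, hδzw]
      linarith
  -- conclude
  have hfinal : ∑ u, ∑ v, (if T'.Adj u v then |(T'.degree u : ℤ) - (T'.degree v : ℤ)| else 0)
      - ∑ u, ∑ v, (if T.Adj u v then |(T.degree u : ℤ) - (T.degree v : ℤ)| else 0)
      = ∑ u, ∑ v, δ u v := by
    rw [← Finset.sum_sub_distrib]
    apply Finset.sum_congr rfl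
    intro u _
    rw [← Finset.sum_sub_distrib]
  rw [key, key'] at hfinal
  linarith
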